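/- Let p be a prime with p ≡ 1 (mod 6) and let s be an integer not divisible by p. Then |T_3(χ, s)| ≤ 3√p, where T_3(χ, s) = ∑_{x=0}^{p-1} χ(x)·e_p(s·x³) and χ is the Legendre symbol modulo p. -/

import Mathlib

set_option maxHeartbeats 1000000
open Finset Polynomial

theorem card_ker3 (p : ℕ) [hp : Fact p.Prime] (h3 : 3 ∣ p - 1) :
    (univ.filter fun u : (ZMod p)ˣ => u ^ 3 = 1).card = 3 := by
  obtain ⟨g, hg⟩ := IsCyclic.exists_generator (α := (ZMod p)ˣ)
  have hg_ord : orderOf g = p - 1 := by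
    rw [orderOf_eq_card_of_forall_mem_zpowers hg, Nat.card_eq_fintype_card, ZMod.card_units p]
  have hp1 : p - 1 ≠ 0 := by have := hp.out.two_le; omega
  set ζ := g ^ ((p - 1) / 3) with hζ
  have hζ_ord : orderOf ζ = 3 := by
    rw [hζ, orderOf_pow, hg_ord, Nat.gcd_eq_right (Nat.div_dvd_of_dvd h3),
      Nat.div_div_self h3 hp1]
  have hprim : IsPrimitiveRoot ((ζ : ZMod p)) 3 := by
    rw [IsPrimitiveRoot.coe_units_iff, ← hζ_ord]
    exact IsPrimitiveRoot.orderOf ζ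
  have hb : (univ.filter fun u : (ZMod p)ˣ => u ^ 3 = 1).card
      = (nthRootsFinset 3 (1 : ZMod p)).card := by
    refine Finset.card_bij (fun u _ => (u : ZMod p)) ?_ ?_ ?_
    · intro u hu
      rw [Polynomial.mem_nthRootsFinset (by norm_num)]
      rw [mem_filter] at hu
      have := congrArg (Units.val) hu.2
      push_cast at this
      exact this
    · intro u _ v _ h
      exact Units.ext h
    · intro w hw
      rw [Polynomial.mem_nthRootsFinset (by norm_num)] at hw
      have hwu : IsUnit w := by
        apply IsUnit.of_mul_eq_one (a := w) (w ^ 2)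
        rw [← pow_succ']; exact hw
      refine ⟨hwu.unit, ?_, rfl⟩
      rw [mem_filter]
      exact ⟨mem_univ _, Units.ext (by push_cast [hwu.unit_spec]; exact hw)⟩
  rw [hb, hprim.card_nthRootsFinset]

theorem gauss_abs (p : ℕ) [hp : Fact p.Prime] (χ : MulChar (ZMod p) ℂ) (hχ : χ ≠ 1)
    (b : ZMod p) (hb : b ≠ 0) :
    ‖gaussSum χ ((ZMod.stdAddChar (N := p)).mulShift b)‖ = Real.sqrt p := by
  set ψ := (ZMod.stdAddChar (N := p)).mulShift b with hψdef
  have hψprim : ψ.IsPrimitive :=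
    AddChar.IsPrimitive.of_ne_one (ZMod.isPrimitive_stdAddChar p hb)
  have habs : ∀ x : ZMod p, ‖ψ x‖ = 1 := by
    intro x
    rw [hψdef, AddChar.mulShift_apply, ZMod.stdAddChar_apply]
    exact Circle.norm_coe _
  have hconj : (starRingEnd ℂ) (gaussSum χ ψ) = gaussSum χ⁻¹ ψ⁻¹ := by
    rw [gaussSum, gaussSum, map_sum]
    refine Finset.sum_congr rfl fun x _ => ?_
    rw [map_mul]
    congr 1
    · exact MulChar.star_apply' χ x
    · rw [AddChar.inv_apply, AddChar.map_neg_eq_inv, Complex.inv_eq_conj (habs x)]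
  have key : (Complex.normSq (gaussSum χ ψ) : ℂ) = (p : ℂ) := by
    rw [← Complex.mul_conj, hconj, gaussSum_mul_gaussSum_eq_card hχ hψprim, ZMod.card]
  have key2 : Complex.normSq (gaussSum χ ψ) = (p : ℝ) := by exact_mod_cast key
  rw [Complex.norm_def, key2]

-- units sum lemma
theorem sum_units_eq (p : ℕ) [hp : Fact p.Prime] (g : ZMod p → ℂ) (hg : g 0 = 0) :
    ∑ y : ZMod p, g y = ∑ u : (ZMod p)ˣ, g u := by
  rw [← Finset.sum_erase (Finset.univ) hg]
  symm
  refine Finset.sum_bij' (fun (u : (ZMod p)ˣ) _ => (u : ZMod p))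
    (fun y hy => Units.mk0 y (Finset.ne_of_mem_erase hy)) ?_ ?_ ?_ ?_ ?_
  · intro u _
    exact Finset.mem_erase.mpr ⟨u.ne_zero, Finset.mem_univ _⟩
  · intro y _
    exact Finset.mem_univ _
  · intro u _
    exact Units.ext (by simp)
  · intro y hy
    simp
  · intro u _
    rfl

theorem cube_identity (p : ℕ) [hp : Fact p.Prime] (h3 : 3 ∣ p - 1)
    (ψ : MulChar (ZMod p) ℂ) (hψ : orderOf ψ = 3) (f : ZMod p → ℂ) :
    ∑ u : (ZMod p)ˣ, f ((u : ZMod p) ^ 3)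
      = ∑ u : (ZMod p)ˣ, (1 + ψ (u : ZMod p) + ψ (u : ZMod p) ^ 2) * f (u : ZMod p) := by
  classical
  have hψ3 : ψ ^ 3 = 1 := hψ ▸ pow_orderOf_eq_one ψ
  have hz3 : ∀ u : (ZMod p)ˣ, ψ (u : ZMod p) ^ 3 = 1 := fun u => by
    rw [← MulChar.pow_apply_coe, hψ3, MulChar.one_apply_coe]
  have hψne : ψ ≠ 1 := by
    intro h; rw [h, orderOf_one] at hψ; norm_num at hψ
  set Hf : Finset (ZMod p)ˣ := univ.filter (fun y => ∃ v : (ZMod p)ˣ, v ^ 3 = y) with hHf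
  set Kf : Finset (ZMod p)ˣ := univ.filter (fun y => ψ (y : ZMod p) = 1) with hKf
  have hker := card_ker3 p h3
  -- fiber counts
  have hcnt : ∀ y : (ZMod p)ˣ, (univ.filter fun u : (ZMod p)ˣ => u ^ 3 = y).card
      = if y ∈ Hf then 3 else 0 := by
    intro y
    by_cases hy : y ∈ Hf
    · rw [if_pos hy]
      simp only [hHf, mem_filter, mem_univ, true_and] at hy
      obtain ⟨v, hv⟩ := hy
      have hb : (univ.filter fun u : (ZMod p)ˣ => u ^ 3 = y).card
          = (univ.filter fun u : (ZMod p)ˣ => u ^ 3 = 1).card := by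
        refine Finset.card_nbij' (fun w => v⁻¹ * w) (fun w => v * w) ?_ ?_ ?_ ?_
        · intro w hw
          rw [mem_coe, mem_filter] at hw ⊢
          refine ⟨mem_univ _, ?_⟩
          rw [mul_pow, hw.2, ← hv]
          group
        · intro w hw
          rw [mem_coe, mem_filter] at hw ⊢
          refine ⟨mem_univ _, ?_⟩
          rw [mul_pow, hw.2, hv, mul_one]
        · intro w _; group
        · intro w _; group
      rw [hb, hker]
    · rw [if_neg hy, Finset.card_eq_zero, Finset.filter_eq_empty_iff]
      intro u _ he
      exact hy (mem_filter.mpr ⟨mem_univ _, ⟨u, he⟩⟩)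
  -- card of Hf
  have hH3 : 3 * Hf.card = p - 1 := by
    have hsum := Finset.card_eq_sum_card_image (fun u : (ZMod p)ˣ => u ^ 3) univ
    have himg : (univ.image fun u : (ZMod p)ˣ => u ^ 3) = Hf := by
      ext y
      simp [hHf, Finset.mem_image]
    rw [himg, Finset.card_univ, ZMod.card_units p] at hsum
    rw [Finset.sum_congr rfl (fun y hy => by rw [hcnt y, if_pos hy]),
      Finset.sum_const, smul_eq_mul] at hsum
    omega
  -- Hf ⊆ Kf
  have hsub : Hf ⊆ Kf := by
    intro y hy
    simp only [hHf, mem_filter, mem_univ, true_and] at hy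
    obtain ⟨v, hv⟩ := hy
    simp only [hKf, mem_filter, mem_univ, true_and]
    have hc : ((v : ZMod p)) ^ 3 = (y : ZMod p) := by
      rw [← Units.val_pow_eq_pow_val, hv]
    rw [← hc, map_pow]
    exact hz3 v
  -- bound on card of Kf
  obtain ⟨x₁, hx₁⟩ := MulChar.ne_one_iff.mp hψne
  set z := ψ (x₁ : ZMod p) with hzdef
  have hz : z ^ 3 = 1 := hz3 x₁
  have hz0 : z ≠ 0 := fun h => by rw [h] at hz; norm_num at hz
  have hz1 : z ≠ 1 := hx₁
  have hz2 : z ^ 2 ≠ 1 := fun h => hz1 (by rw [← hz, pow_succ, h, one_mul])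
  have hzz : z ^ 2 ≠ z := fun h => by
    apply hz1
    have : z * z = z * 1 := by rw [mul_one, ← pow_two, h]
    exact mul_left_cancel₀ hz0 this
  have htrans : ∀ (x : (ZMod p)ˣ) (w : ℂ), (univ.filter (fun y : (ZMod p)ˣ => ψ (y : ZMod p) = w)).card
      = (univ.filter (fun y : (ZMod p)ˣ => ψ (y : ZMod p) = ψ (x : ZMod p) * w)).card := by
    intro x w
    refine Finset.card_nbij' (fun y => x * y) (fun y => x⁻¹ * y) ?_ ?_ ?_ ?_
    · intro y hy
      rw [mem_coe, mem_filter] at hy ⊢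
      refine ⟨mem_univ _, ?_⟩
      rw [Units.val_mul, map_mul, hy.2]
    · intro y hy
      rw [mem_coe, mem_filter] at hy ⊢
      refine ⟨mem_univ _, ?_⟩
      have hinv : ψ ((x⁻¹ : (ZMod p)ˣ) : ZMod p) * ψ (x : ZMod p) = 1 := by
        rw [← map_mul]
        norm_cast
        rw [inv_mul_cancel]
        exact map_one ψ
      rw [Units.val_mul, map_mul, hy.2, ← mul_assoc, hinv, one_mul]
    · intro y _; group
    · intro y _; group
  have hK1 : Kf.card = (univ.filter (fun y : (ZMod p)ˣ => ψ (y : ZMod p) = z)).card := by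
    rw [hKf]
    rw [htrans x₁ 1, mul_one]
  have hK2 : Kf.card = (univ.filter (fun y : (ZMod p)ˣ => ψ (y : ZMod p) = z ^ 2)).card := by
    rw [hKf, htrans x₁ 1, htrans x₁ (z*1), mul_one, ← hzdef, ← pow_two]
  have hKbound : 3 * Kf.card ≤ p - 1 := by
    set K1 := univ.filter (fun y : (ZMod p)ˣ => ψ (y : ZMod p) = z) with hK1def
    set K2 := univ.filter (fun y : (ZMod p)ˣ => ψ (y : ZMod p) = z ^ 2) with hK2def
    have hd1 : Disjoint Kf K1 := by
      rw [Finset.disjoint_left]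
      intro y hy hy1
      rw [hKf, mem_filter] at hy
      rw [hK1def, mem_filter] at hy1
      apply hz1
      rw [← hy1.2, hy.2]
    have hd2 : Disjoint Kf K2 := by
      rw [Finset.disjoint_left]
      intro y hy hy1
      rw [hKf, mem_filter] at hy
      rw [hK2def, mem_filter] at hy1
      apply hz2
      rw [← hy1.2, hy.2]
    have hd3 : Disjoint K1 K2 := by
      rw [Finset.disjoint_left]
      intro y hy hy1
      rw [hK1def, mem_filter] at hy
      rw [hK2def, mem_filter] at hy1
      apply hzz
      rw [← hy1.2, hy.2]
    have hcu : (Kf ∪ K1 ∪ K2).card = Kf.card + K1.card + K2.card := by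
      rw [Finset.card_union_of_disjoint (Finset.disjoint_union_left.mpr ⟨hd2, hd3⟩),
        Finset.card_union_of_disjoint hd1]
    have hle : (Kf ∪ K1 ∪ K2).card ≤ p - 1 := by
      have := Finset.card_le_univ (Kf ∪ K1 ∪ K2)
      rwa [ZMod.card_units p] at this
    omega
  have hKH : Kf = Hf := (Finset.eq_of_subset_of_card_le hsub (by omega)).symm
  -- values
  have hcval : ∀ y : (ZMod p)ˣ, 1 + ψ (y : ZMod p) + ψ (y : ZMod p) ^ 2
      = if y ∈ Hf then 3 else 0 := by
    intro y
    rw [← hKH]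
    by_cases hy : y ∈ Kf
    · rw [if_pos hy]
      simp only [hKf, mem_filter, mem_univ, true_and] at hy
      rw [hy]; norm_num
    · rw [if_neg hy]
      simp only [hKf, mem_filter, mem_univ, true_and] at hy
      have hfac : (ψ (y : ZMod p) - 1) * (1 + ψ (y : ZMod p) + ψ (y : ZMod p) ^ 2) = 0 := by
        linear_combination hz3 y
      exact (mul_eq_zero.mp hfac).resolve_left (sub_ne_zero.mpr hy)
  -- assembly
  have hstep : ∑ u : (ZMod p)ˣ, f ((u : ZMod p) ^ 3)
      = ∑ u : (ZMod p)ˣ, (fun y : (ZMod p)ˣ => f (y : ZMod p)) (u ^ 3) := by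
    refine Finset.sum_congr rfl fun u _ => ?_
    show f _ = f _
    rw [Units.val_pow_eq_pow_val]
  rw [hstep, ← Finset.sum_fiberwise' univ (fun u : (ZMod p)ˣ => u ^ 3)
    (fun y : (ZMod p)ˣ => f (y : ZMod p))]
  refine Finset.sum_congr rfl fun y _ => ?_
  rw [Finset.sum_const, hcnt y, hcval y]
  split_ifs <;> simp


/-- For a prime `p ≡ 1 (mod 6)` and `s` not divisible by `p`, the twisted cubic
sum satisfies `|T₃(χ, s)| ≤ 3√p`, where `T₃(χ, s) = ∑ χ(x) e_p(s x³)`. -/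
theorem twisted_cubic_sum_upper_bound
    (p : ℕ) [hp : Fact p.Prime] (hp6 : p % 6 = 1)
    (s : ℤ) (hs : ¬ (p : ℤ) ∣ s) :
    ‖∑ x ∈ Finset.range p,
        (legendreSym p (x : ℤ) : ℂ) *
          Complex.exp (2 * Real.pi * Complex.I * ((s * (x : ℤ) ^ 3 : ℤ) : ℂ) / p)‖
      ≤ 3 * Real.sqrt p := by
  classical
  have hp1 : 1 < p := hp.out.one_lt
  have hp2 : p ≠ 2 := by omega
  have h3 : 3 ∣ p - 1 := by omega
  set χ : MulChar (ZMod p) ℂ := (quadraticChar (ZMod p)).ringHomComp (Int.castRingHom ℂ)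
    with hχdef
  have hχne : χ ≠ 1 := by
    rw [hχdef, MulChar.ringHomComp_ne_one_iff (fun a b h => by simpa using h)]
    apply quadraticChar_ne_one
    rw [ZMod.ringChar_zmod_n]
    exact hp2
  have hχq : χ.IsQuadratic := (quadraticChar_isQuadratic (ZMod p)).comp _
  have hχsq : χ ^ 2 = 1 := hχq.sq_eq_one
  obtain ⟨ψ, hψ⟩ := MulChar.exists_mulChar_orderOf (ZMod p) (R := ℂ) (n := 3)
    (by rw [ZMod.card]; exact h3) (Complex.isPrimitiveRoot_exp 3 (by norm_num))
  have hψ3 : ψ ^ 3 = 1 := hψ ▸ pow_orderOf_eq_one ψ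
  have hs' : (s : ZMod p) ≠ 0 := by
    rwa [Ne, ZMod.intCast_zmod_eq_zero_iff_dvd]
  set e : AddChar (ZMod p) ℂ := ZMod.stdAddChar with hedef
  set ψ' : AddChar (ZMod p) ℂ := e.mulShift ((s : ZMod p)) with hψ'def
  -- nontriviality of the three characters
  have hne : ∀ j : ℕ, χ * ψ ^ j ≠ 1 := by
    intro j h
    have hχeq : χ = ψ ^ j := by
      have h2 := hχq.inv
      calc χ = χ⁻¹ := h2.symm
        _ = ψ ^ j := by
            rw [inv_eq_iff_mul_eq_one, mul_comm]
            rw [mul_comm] at h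
            exact h
    have hx2 : (ψ ^ j) ^ 2 = 1 := by rw [← hχeq]; exact hχsq
    have hx3 : (ψ ^ j) ^ 3 = 1 := by
      rw [← pow_mul, mul_comm, pow_mul, hψ3, one_pow]
    have hψj : ψ ^ j = 1 := by
      calc ψ ^ j = (ψ ^ j) ^ 3 * ((ψ ^ j) ^ 2)⁻¹ := by group
        _ = 1 := by rw [hx2, hx3, inv_one, mul_one]
    rw [hψj, mul_one] at h
    exact hχne h
  -- step 1 : rewrite as sum over ZMod p
  have h1 : (∑ x ∈ Finset.range p,
        (legendreSym p (x : ℤ) : ℂ) *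
          Complex.exp (2 * Real.pi * Complex.I * ((s * (x : ℤ) ^ 3 : ℤ) : ℂ) / p))
      = ∑ y : ZMod p, χ y * e ((s : ZMod p) * y ^ 3) := by
    refine Finset.sum_nbij' (fun x => (x : ZMod p)) (fun y => y.val) ?_ ?_ ?_ ?_ ?_
    · intro x _; exact Finset.mem_univ _
    · intro y _; exact Finset.mem_range.mpr (ZMod.val_lt y)
    · intro x hx; exact ZMod.val_cast_of_lt (Finset.mem_range.mp hx)
    · intro y _; exact ZMod.natCast_rightInverse y
    · intro x _
      have hleg : (legendreSym p (x : ℤ) : ℂ) = χ ((x : ℕ) : ZMod p) := by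
        rw [legendreSym, hχdef, MulChar.ringHomComp_apply]
        push_cast
        rfl
      have hexp : Complex.exp (2 * Real.pi * Complex.I * ((s * (x : ℤ) ^ 3 : ℤ) : ℂ) / p)
          = e ((s : ZMod p) * ((x : ℕ) : ZMod p) ^ 3) := by
        rw [hedef, ← ZMod.stdAddChar_coe (s * (x : ℤ) ^ 3)]
        congr 1
        push_cast
        ring
      rw [hleg, hexp]
  rw [h1]
  -- step 2 : restrict to units and express via cubes
  have hg0 : χ (0 : ZMod p) * e ((s : ZMod p) * (0 : ZMod p) ^ 3) = 0 := by
    rw [MulChar.map_zero, zero_mul]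
  rw [sum_units_eq p _ (by simpa using hg0)]
  have h2 : ∀ u : (ZMod p)ˣ, χ (u : ZMod p) * e ((s : ZMod p) * (u : ZMod p) ^ 3)
      = (fun t => χ t * ψ' t) ((u : ZMod p) ^ 3) := by
    intro u
    show _ = χ ((u : ZMod p) ^ 3) * ψ' ((u : ZMod p) ^ 3)
    rw [hψ'def, AddChar.mulShift_apply]
    congr 1
    rw [map_pow]
    have : χ (u : ZMod p) ^ 2 = 1 := by
      rw [← MulChar.pow_apply_coe, hχsq, MulChar.one_apply_coe]
    calc χ (u : ZMod p) = χ (u : ZMod p) * (χ (u : ZMod p) ^ 2) := by rw [this, mul_one]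
      _ = χ (u : ZMod p) ^ 3 := by ring
  rw [Finset.sum_congr rfl fun u _ => h2 u,
    cube_identity p h3 ψ hψ (fun t => χ t * ψ' t)]

  -- step 3 : split into three Gauss sums
  have h4 : ∀ u : (ZMod p)ˣ,
      (1 + ψ (u : ZMod p) + ψ (u : ZMod p) ^ 2) * (χ (u : ZMod p) * ψ' (u : ZMod p))
      = ∑ j ∈ Finset.range 3, (χ * ψ ^ j) (u : ZMod p) * ψ' (u : ZMod p) := by
    intro u
    have hmul : ∀ j : ℕ, (χ * ψ ^ j) (u : ZMod p)
        = χ (u : ZMod p) * ψ (u : ZMod p) ^ j := by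
      intro j
      rw [MulChar.mul_apply, MulChar.pow_apply_coe]
    rw [Finset.sum_range_succ, Finset.sum_range_succ, Finset.sum_range_one,
      hmul 0, hmul 1, hmul 2]
    ring
  rw [Finset.sum_congr rfl fun u _ => h4 u, Finset.sum_comm]
  have h5 : ∀ j : ℕ, (∑ u : (ZMod p)ˣ, (χ * ψ ^ j) (u : ZMod p) * ψ' (u : ZMod p))
      = gaussSum (χ * ψ ^ j) ψ' := by
    intro j
    rw [gaussSum, sum_units_eq p _ (by rw [MulChar.map_zero, zero_mul])]
  rw [Finset.sum_congr rfl fun j _ => h5 j]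
  -- step 4 : triangle inequality and Gauss sum norms
  calc ‖∑ j ∈ Finset.range 3, gaussSum (χ * ψ ^ j) ψ'‖
      ≤ ∑ j ∈ Finset.range 3, ‖gaussSum (χ * ψ ^ j) ψ'‖ := by
        exact norm_sum_le _ _
    _ = ∑ _j ∈ Finset.range 3, Real.sqrt p := by
        refine Finset.sum_congr rfl fun j _ => ?_
        exact gauss_abs p (χ * ψ ^ j) (hne j) _ hs'
    _ = 3 * Real.sqrt p := by
        rw [Finset.sum_const, Finset.card_range]
        simp
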